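/- Let B be a small category and F, H : Bᵒᵖ → Type* presheaves corresponding to profunctors f, h : 1 ⇸ B. If f has a right adjoint profunctor g : B ⇸ 1 (corresponding to G : B → Type*), then the hom-object Hom_{[Bᵒᵖ,Type*]}(F, H) is naturally isomorphic to the coend (profunctor composite) g ∘ h = ∫^b G(b) × H(b), i.e., Hom(F, H) ≅ ∫^b G(b) × H(b). -/

import Mathlib

open CategoryTheory Opposite

universe v u u'

variable {B : Type v} [SmallCategory B]

/-- An adjunction `f ⊣ g` in the bicategory of `Type v`-valued profunctors, where
`f : 𝟙 ⇸ B` corresponds to the presheaf `F : Bᵒᵖ ⥤ Type v` and `g : B ⇸ 𝟙` corresponds to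
the copresheaf `G : B ⥤ Type v`.  The counit `f ∘ g ⟶ 1_B` is a natural family
`ε : F(b') × G(b) → B(b', b)`, and the unit `1_𝟙 ⟶ g ∘ f` is an element of the coend
`∫^b G(b) × F(b)`, given by a representative `(b₀, g₀, x₀)`; the two triangle identities are
`tri₁` and `tri₂`. -/
structure ProfAdj (F : Bᵒᵖ ⥤ Type v) (G : B ⥤ Type v) where
  ε : ∀ {b b' : B}, F.obj (op b') → G.obj b → (b' ⟶ b)
  ε_natl : ∀ {b b' b'' : B} (h : b'' ⟶ b') (x : F.obj (op b')) (y : G.obj b),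
    ε (F.map h.op x) y = h ≫ ε x y
  ε_natr : ∀ {b b' b'' : B} (k : b ⟶ b'') (x : F.obj (op b')) (y : G.obj b),
    ε x (G.map k y) = ε x y ≫ k
  b₀ : B
  g₀ : G.obj b₀
  x₀ : F.obj (op b₀)
  tri₁ : ∀ (b : B) (x : F.obj (op b)), F.map (ε x g₀).op x₀ = x
  tri₂ : ∀ (b : B) (y : G.obj b), G.map (ε x₀ y) g₀ = y

/-- Generating relation for the coend `∫^b G(b) × H(b)`. -/
def coendBRel (G : B ⥤ Type v) (H : Bᵒᵖ ⥤ Type v) :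
    (Σ b : B, G.obj b × H.obj (op b)) → (Σ b : B, G.obj b × H.obj (op b)) → Prop :=
  fun p q => ∃ (f : p.1 ⟶ q.1) (g : G.obj p.1) (y : H.obj (op q.1)),
    p.2 = (g, H.map f.op y) ∧ q.2 = (G.map f g, y)

/-- The coend `∫^b G(b) × H(b)`, i.e. the composite of the profunctors `g : B ⇸ 𝟙` and
`h : 𝟙 ⇸ B` corresponding to `G` and `H`. -/
def CoendB (G : B ⥤ Type v) (H : Bᵒᵖ ⥤ Type v) : Type v :=
  Quot (coendBRel G H)

/-- Functoriality of the coend in `H`. -/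
def coendBMap (G : B ⥤ Type v) {H H' : Bᵒᵖ ⥤ Type v} (α : H ⟶ H') :
    CoendB G H → CoendB G H' :=
  Quot.map (fun p => ⟨p.1, p.2.1, α.app (op p.1) p.2.2⟩) (by
    rintro ⟨b, g, x⟩ ⟨b', g', x'⟩ ⟨f, g₁, y, h1, h2⟩
    simp only [Prod.mk.injEq] at h1 h2
    refine ⟨f, g₁, α.app (op b') y, ?_, ?_⟩
    · simp only [Prod.mk.injEq]
      refine ⟨h1.1, ?_⟩
      rw [h1.2]
      first
        | exact NatTrans.naturality_apply α f.op y
        | exact (NatTrans.naturality_apply α f.op y).symm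
        | simp
    · simp only [Prod.mk.injEq]
      exact ⟨h2.1, congrArg (α.app (op b')) h2.2⟩)

/-- Backward map: from a coend element build a natural transformation. -/
def profAdjInv {F : Bᵒᵖ ⥤ Type v} {G : B ⥤ Type v} (adj : ProfAdj F G)
    (H : Bᵒᵖ ⥤ Type v) : CoendB G H → (F ⟶ H) :=
  Quot.lift (fun p =>
    { app := fun c => TypeCat.ofHom (fun (x : F.obj c) => H.map (adj.ε (b' := c.unop) x p.2.1).op p.2.2)
      naturality := by
        rintro ⟨c⟩ ⟨c'⟩ h
        ext x
        simp only [types_comp_apply]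
        show H.map (adj.ε (F.map h.unop.op x) p.2.1).op p.2.2 = _
        rw [adj.ε_natl, op_comp, FunctorToTypes.map_comp_apply]
        rfl })
    (by
      rintro ⟨b, pp⟩ ⟨b', qq⟩ ⟨f, g₁, z, h1, h2⟩
      dsimp only at f g₁ z h1 h2
      rw [h1, h2]
      ext c x
      simp only [TypeCat.Fun.toFun_apply, TypeCat.ofHom_apply]
      rw [← FunctorToTypes.map_comp_apply, ← op_comp, adj.ε_natr])

/-- if the profunctor `f : 𝟙 ⇸ B` corresponding to `F` has right adjoint
`g : B ⇸ 𝟙` corresponding to `G`, then for every presheaf `H` the hom-object `Hom(F, H)` is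
isomorphic, naturally in `H`, to the profunctor composite `g ∘ h = ∫^b G(b) × H(b)`. -/
theorem hom_iso_coend_of_profunctor_adjunction (F : Bᵒᵖ ⥤ Type v) (G : B ⥤ Type v)
    (adj : ProfAdj F G) :
    ∃ e : ∀ H : Bᵒᵖ ⥤ Type v, (F ⟶ H) ≃ CoendB G H,
      ∀ (H H' : Bᵒᵖ ⥤ Type v) (α : H ⟶ H') (u : F ⟶ H),
        e H' (u ≫ α) = coendBMap G α (e H u) := by
  refine ⟨fun H =>
    { toFun := fun u => Quot.mk _ ⟨adj.b₀, adj.g₀, u.app (op adj.b₀) adj.x₀⟩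
      invFun := profAdjInv adj H
      left_inv := ?_
      right_inv := ?_ }, ?_⟩
  · intro u
    ext c x
    simp only [TypeCat.Fun.toFun_apply]
    show H.map (adj.ε x adj.g₀).op (u.app (op adj.b₀) adj.x₀) = u.app c x
    rw [← FunctorToTypes.naturality]
    obtain ⟨c⟩ := c
    rw [adj.tri₁]
  · refine Quot.ind ?_
    rintro ⟨b, g, y⟩
    exact Quot.sound ⟨adj.ε adj.x₀ g, adj.g₀, y, rfl, by rw [adj.tri₂]⟩
  · intro H H' α u
    rfl
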